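/- Fix n ≥ 1, reals e₁,…,eₙ, T > 0, and s ≥ 0. If 0 < α'₋ ≤ α₋ ≤ α₊ ≤ α'₊, then p_sta(α₋, α₊) ≤ p_sta(α'₋, α'₊), where p_sta(α₋, α₊) := max over all subsets I ⊆ {1,…,n} of [α₋ Σ_{i∈I} e_i + α₊ Σ_{i∈Iᶜ} e_i − sT] / (|I| α₋ + |Iᶜ| α₊). In particular, the static equilibrium price is increasing in α₊ and decreasing in α₋. -/

import Mathlib

private lemma split_sum {n : ℕ} (I : Finset (Fin n)) (a b : ℝ) (f : Fin n → ℝ) :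
    a * ∑ i ∈ I, f i + b * ∑ i ∈ Iᶜ, f i = ∑ i, (if i ∈ I then a else b) * f i := by
  rw [← Finset.sum_add_sum_compl I fun i => (if i ∈ I then a else b) * f i,
      Finset.mul_sum, Finset.mul_sum]
  congr 1
  · exact Finset.sum_congr rfl fun i hi => by rw [if_pos hi]
  · exact Finset.sum_congr rfl fun i hi => by rw [if_neg (Finset.mem_compl.mp hi)]

private lemma sum_sub_const {n : ℕ} (J : Finset (Fin n)) (f : Fin n → ℝ) (p : ℝ) :
    ∑ i ∈ J, (f i - p) = (∑ i ∈ J, f i) - (J.card : ℝ) * p := by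
  rw [Finset.sum_sub_distrib, Finset.sum_const, nsmul_eq_mul]

private lemma den_pos {n : ℕ} (hn : 1 ≤ n) (J : Finset (Fin n)) (a b : ℝ)
    (ha : 0 < a) (hb : 0 < b) :
    0 < (J.card : ℝ) * a + ((Jᶜ).card : ℝ) * b := by
  have hc : J.card + (Jᶜ).card = n := by simpa using Finset.card_add_card_compl J
  rcases Nat.eq_zero_or_pos J.card with h0 | h0
  · have h1 : 1 ≤ (Jᶜ).card := by omega
    have h1' : (1:ℝ) ≤ ((Jᶜ).card : ℝ) := by exact_mod_cast h1
    have : (0:ℝ) ≤ (J.card : ℝ) := Nat.cast_nonneg _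
    nlinarith
  · have h1' : (1:ℝ) ≤ (J.card : ℝ) := by exact_mod_cast h0
    have : (0:ℝ) ≤ ((Jᶜ).card : ℝ) := Nat.cast_nonneg _
    nlinarith

/-- the static equilibrium price is increasing in `α₊` and
decreasing in `α₋`. -/
theorem static_price_monotone_in_costs
    (n : ℕ) (hn : 1 ≤ n) (e : Fin n → ℝ) (T : ℝ) (hT : 0 < T)
    (s : ℝ) (hs : 0 ≤ s)
    (psta : ℝ → ℝ → ℝ)
    (hpsta : ∀ a b : ℝ, psta a b =
      (Finset.univ : Finset (Finset (Fin n))).sup' Finset.univ_nonempty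
        (fun I => (a * ∑ i ∈ I, e i + b * ∑ i ∈ Iᶜ, e i - s * T) /
          (I.card * a + (Iᶜ).card * b)))
    (αm' αm αp αp' : ℝ)
    (h1 : 0 < αm') (h2 : αm' ≤ αm) (h3 : αm ≤ αp) (h4 : αp ≤ αp') :
    psta αm αp ≤ psta αm' αp' := by
  have hαm : 0 < αm := lt_of_lt_of_le h1 h2
  have hαp : 0 < αp := lt_of_lt_of_le hαm h3
  have hαp' : 0 < αp' := lt_of_lt_of_le hαp h4
  rw [hpsta, hpsta]
  apply Finset.sup'_le
  intro I _
  set p : ℝ := (αm * ∑ i ∈ I, e i + αp * ∑ i ∈ Iᶜ, e i - s * T) /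
      ((I.card : ℝ) * αm + ((Iᶜ).card : ℝ) * αp) with hp
  set I' : Finset (Fin n) := Finset.univ.filter (fun i => e i < p) with hI'
  have hdI := den_pos hn I αm αp hαm hαp
  have hdI' := den_pos hn I' αm' αp' h1 hαp'
  refine le_trans ?_ (Finset.le_sup' _ (Finset.mem_univ I'))
  rw [le_div_iff₀ hdI']
  -- numerator identities
  have e1 : αm * ∑ i ∈ I, e i + αp * ∑ i ∈ Iᶜ, e i - s * T
      - p * ((I.card : ℝ) * αm + ((Iᶜ).card : ℝ) * αp)
      = ∑ i, (if i ∈ I then αm else αp) * (e i - p) - s * T := by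
    rw [← split_sum I αm αp (fun i => e i - p), sum_sub_const, sum_sub_const]
    ring
  have e2 : αm' * ∑ i ∈ I', e i + αp' * ∑ i ∈ I'ᶜ, e i - s * T
      - p * ((I'.card : ℝ) * αm' + ((I'ᶜ).card : ℝ) * αp')
      = ∑ i, (if i ∈ I' then αm' else αp') * (e i - p) - s * T := by
    rw [← split_sum I' αm' αp' (fun i => e i - p), sum_sub_const, sum_sub_const]
    ring
  have h0 : αm * ∑ i ∈ I, e i + αp * ∑ i ∈ Iᶜ, e i - s * T
      - p * ((I.card : ℝ) * αm + ((Iᶜ).card : ℝ) * αp) = 0 := by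
    rw [hp]
    rw [div_mul_cancel₀ _ hdI.ne', sub_self]
  have hsum : ∑ i, (if i ∈ I then αm else αp) * (e i - p)
      ≤ ∑ i, (if i ∈ I' then αm' else αp') * (e i - p) := by
    apply Finset.sum_le_sum
    intro i _
    by_cases h : e i < p
    · rw [if_pos (by simp [hI', h] : i ∈ I')]
      by_cases hI : i ∈ I
      · rw [if_pos hI]; nlinarith
      · rw [if_neg hI]; nlinarith
    · rw [if_neg (by simp [hI', h] : i ∉ I')]
      push_neg at h
      by_cases hI : i ∈ I
      · rw [if_pos hI]; nlinarith
      · rw [if_neg hI]; nlinarith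
  linarith [e1, e2, hsum, h0]
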